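/- In the uniform encoding model with parameter u, the probability of encoding failure is sandwiched as (1/2) · P(rank(G₀^U) < u) ≤ P(encoding failure) ≤ P(rank(G₀^U) < u). -/

import Mathlib

/-- The rank of the submatrix of `G` consisting of the rows indexed by `U`. -/
noncomputable def subRank {n l : ℕ} (G : Matrix (Fin n) (Fin l) (ZMod 2))
    (U : Finset (Fin n)) : ℕ :=
  (Matrix.of fun (i : {x : Fin n // x ∈ U}) (j : Fin l) => G i.1 j).rank

/-- In the uniform encoding model with parameter `u`, the sample space consists of pairs
`(U, b)` where `U` is a `u`-element subset of the coordinates and `b` is a binary vector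
(only its restriction to `U` matters, so taking `b` uniform on all of `𝔽₂ⁿ` gives the
uniform distribution on `𝔽₂^U`).  `failCount` counts the outcomes for which the linear
system `G₀^U d = b^U` has no solution `d`. -/
def failCount (n l : ℕ) (G : Matrix (Fin n) (Fin l) (ZMod 2)) (u : ℕ) : ℕ :=
  (((Finset.univ : Finset (Fin n)).powersetCard u ×ˢ
      (Finset.univ : Finset (Fin n → ZMod 2))).filter
    fun p => ¬ ∃ d : Fin l → ZMod 2, ∀ i ∈ p.1, G.mulVec d i = p.2 i).card

/-- Number of `u`-element subsets `U` of coordinates with `rank(G^U) < u`. -/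
noncomputable def rankLtCount (n l : ℕ) (G : Matrix (Fin n) (Fin l) (ZMod 2))
    (u : ℕ) : ℕ :=
  (((Finset.univ : Finset (Fin n)).powersetCard u).filter
    fun U => subRank G U < u).card

open Finset


theorem badB_eq {n l : ℕ} (G : Matrix (Fin n) (Fin l) (ZMod 2)) (U : Finset (Fin n)) :
    (Finset.univ.filter fun b : Fin n → ZMod 2 =>
      ¬ ∃ d : Fin l → ZMod 2, ∀ i ∈ U, G.mulVec d i = b i).card
    = (2 ^ U.card - 2 ^ subRank G U) * 2 ^ (n - U.card) := by
  classical
  set M : Matrix {x : Fin n // x ∈ U} (Fin l) (ZMod 2) :=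
    Matrix.of fun i j => G i.1 j with hM
  set φ := M.mulVecLin with hφ
  have hcond : ∀ b : Fin n → ZMod 2,
      (¬ ∃ d : Fin l → ZMod 2, ∀ i ∈ U, G.mulVec d i = b i) ↔
      ¬ (fun i : {x : Fin n // x ∈ U} => b i.1) ∈ LinearMap.range φ := by
    intro b
    constructor
    · rintro h ⟨d, hd⟩
      exact h ⟨d, fun i hi => congrFun hd ⟨i, hi⟩⟩
    · rintro h ⟨d, hd⟩
      exact h ⟨d, funext fun i => hd i.1 i.2⟩
  have hfilter : (Finset.univ.filter fun b : Fin n → ZMod 2 =>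
      ¬ ∃ d : Fin l → ZMod 2, ∀ i ∈ U, G.mulVec d i = b i)
      = (Finset.univ.filter fun b : Fin n → ZMod 2 =>
        ¬ (fun i : {x : Fin n // x ∈ U} => b i.1) ∈ LinearMap.range φ) := by
    apply Finset.filter_congr
    intro b _
    exact hcond b
  rw [hfilter, ← Fintype.card_subtype]
  -- the splitting equivalence
  let E : (Fin n → ZMod 2) ≃ ({x // x ∈ U} → ZMod 2) × ({x : Fin n // x ∉ U} → ZMod 2) :=
  { toFun := fun b => (fun i => b i.1, fun i => b i.1)
    invFun := fun p i => if h : i ∈ U then p.1 ⟨i, h⟩ else p.2 ⟨i, h⟩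
    left_inv := by
      intro b; funext i; dsimp; split_ifs <;> rfl
    right_inv := by
      intro p
      refine Prod.ext ?_ ?_ <;> funext i <;> dsimp
      · rw [dif_pos i.2]
      · rw [dif_neg i.2] }
  have e1 : {b : Fin n → ZMod 2 //
        ¬ (fun i : {x : Fin n // x ∈ U} => b i.1) ∈ LinearMap.range φ}
      ≃ {p : ({x // x ∈ U} → ZMod 2) × ({x : Fin n // x ∉ U} → ZMod 2) //
        ¬ p.1 ∈ LinearMap.range φ} :=
    E.subtypeEquiv (by intro b; exact Iff.rfl)
  have e2 := e1.trans (Equiv.prodSubtypeFstEquivSubtypeProd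
    (p := fun v : {x // x ∈ U} → ZMod 2 => ¬ v ∈ LinearMap.range φ))
  rw [Fintype.card_congr e2, Fintype.card_prod, Fintype.card_subtype_compl]
  have hcardU : Fintype.card ({x // x ∈ U} → ZMod 2) = 2 ^ U.card := by
    simp [Fintype.card_fun]
  have hrange : Fintype.card {v : {x // x ∈ U} → ZMod 2 // v ∈ LinearMap.range φ}
      = 2 ^ subRank G U := by
    have h := Module.card_eq_pow_finrank (K := ZMod 2) (V := LinearMap.range φ)
    rw [ZMod.card] at h
    have h2 : Fintype.card {v : {x // x ∈ U} → ZMod 2 // v ∈ LinearMap.range φ}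
        = Fintype.card (LinearMap.range φ) := rfl
    rw [h2, h]
    rfl
  have hcompl : Fintype.card ({x : Fin n // x ∉ U} → ZMod 2) = 2 ^ (n - U.card) := by
    have : Fintype.card {x : Fin n // x ∉ U} = n - U.card := by
      simp [Fintype.card_subtype_compl]
    simp [Fintype.card_fun, this]
  rw [hcardU, hrange, hcompl]

theorem subRank_le {n l : ℕ} (G : Matrix (Fin n) (Fin l) (ZMod 2)) (U : Finset (Fin n)) :
    subRank G U ≤ U.card := by
  have := Matrix.rank_le_card_height
    (Matrix.of fun (i : {x : Fin n // x ∈ U}) (j : Fin l) => G i.1 j)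
  simpa [subRank, Fintype.card_coe] using this

theorem badB_zero {n l : ℕ} (G : Matrix (Fin n) (Fin l) (ZMod 2)) (U : Finset (Fin n))
    (h : ¬ subRank G U < U.card) :
    (Finset.univ.filter fun b : Fin n → ZMod 2 =>
      ¬ ∃ d : Fin l → ZMod 2, ∀ i ∈ U, G.mulVec d i = b i).card = 0 := by
  have : subRank G U = U.card := le_antisymm (subRank_le G U) (not_lt.1 h)
  rw [badB_eq, this, Nat.sub_self, zero_mul]

theorem badB_le {n l : ℕ} (G : Matrix (Fin n) (Fin l) (ZMod 2)) (U : Finset (Fin n))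
    (hU : U.card ≤ n) :
    (Finset.univ.filter fun b : Fin n → ZMod 2 =>
      ¬ ∃ d : Fin l → ZMod 2, ∀ i ∈ U, G.mulVec d i = b i).card ≤ 2 ^ n := by
  rw [badB_eq]
  calc (2 ^ U.card - 2 ^ subRank G U) * 2 ^ (n - U.card)
      ≤ 2 ^ U.card * 2 ^ (n - U.card) :=
        Nat.mul_le_mul_right _ (Nat.sub_le _ _)
    _ = 2 ^ n := by rw [← pow_add, Nat.add_sub_cancel' hU]

theorem badB_ge {n l : ℕ} (G : Matrix (Fin n) (Fin l) (ZMod 2)) (U : Finset (Fin n))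
    (hU : U.card ≤ n) (hc : 1 ≤ U.card) (h : subRank G U < U.card) :
    2 ^ (n - 1) ≤ (Finset.univ.filter fun b : Fin n → ZMod 2 =>
      ¬ ∃ d : Fin l → ZMod 2, ∀ i ∈ U, G.mulVec d i = b i).card := by
  rw [badB_eq]
  have h1 : 2 ^ subRank G U ≤ 2 ^ (U.card - 1) :=
    Nat.pow_le_pow_right (by norm_num) (Nat.le_sub_one_of_lt h)
  have h2 : 2 ^ (U.card - 1) ≤ 2 ^ U.card - 2 ^ subRank G U := by
    have : 2 ^ U.card = 2 ^ (U.card - 1) + 2 ^ (U.card - 1) := by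
      rw [← two_mul, ← pow_succ', Nat.sub_add_cancel hc]
    omega
  calc 2 ^ (n - 1) = 2 ^ (U.card - 1) * 2 ^ (n - U.card) := by
        rw [← pow_add]
        congr 1
        omega
    _ ≤ (2 ^ U.card - 2 ^ subRank G U) * 2 ^ (n - U.card) :=
        Nat.mul_le_mul_right _ h2


theorem failCount_eq_sum (n l : ℕ) (G : Matrix (Fin n) (Fin l) (ZMod 2)) (u : ℕ) :
    failCount n l G u = ∑ U ∈ (Finset.univ : Finset (Fin n)).powersetCard u,
      (Finset.univ.filter fun b : Fin n → ZMod 2 =>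
        ¬ ∃ d : Fin l → ZMod 2, ∀ i ∈ U, G.mulVec d i = b i).card := by
  classical
  rw [failCount, Finset.card_filter, Finset.sum_product]
  exact Finset.sum_congr rfl fun U _ => (Finset.card_filter _ _).symm


theorem sandwich (n l : ℕ) (G : Matrix (Fin n) (Fin l) (ZMod 2)) (u : ℕ)
    (hu₁ : 1 ≤ u) (hu₂ : u ≤ n) :
    rankLtCount n l G u * 2 ^ (n - 1) ≤ failCount n l G u ∧
    failCount n l G u ≤ rankLtCount n l G u * 2 ^ n := by
  classical
  rw [failCount_eq_sum]
  have hsum : ∑ U ∈ (Finset.univ : Finset (Fin n)).powersetCard u,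
      (Finset.univ.filter fun b : Fin n → ZMod 2 =>
        ¬ ∃ d : Fin l → ZMod 2, ∀ i ∈ U, G.mulVec d i = b i).card
      = ∑ U ∈ ((Finset.univ : Finset (Fin n)).powersetCard u).filter
          (fun U => subRank G U < u),
        (Finset.univ.filter fun b : Fin n → ZMod 2 =>
          ¬ ∃ d : Fin l → ZMod 2, ∀ i ∈ U, G.mulVec d i = b i).card := by
    refine (Finset.sum_subset (Finset.filter_subset _ _) ?_).symm
    intro U hU hU'
    have hc : U.card = u := (Finset.mem_powersetCard_univ).1 hU
    rw [Finset.mem_filter] at hU'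
    exact badB_zero G U (by rw [hc]; tauto)
  rw [hsum]
  constructor
  · have := Finset.card_nsmul_le_sum
      (((Finset.univ : Finset (Fin n)).powersetCard u).filter (fun U => subRank G U < u))
      (fun U => (Finset.univ.filter fun b : Fin n → ZMod 2 =>
        ¬ ∃ d : Fin l → ZMod 2, ∀ i ∈ U, G.mulVec d i = b i).card) (2 ^ (n - 1)) (fun U hU => by
        rw [Finset.mem_filter] at hU
        have hc : U.card = u := (Finset.mem_powersetCard_univ).1 hU.1
        exact badB_ge G U (hc ▸ hu₂) (hc ▸ hu₁) (hc ▸ hU.2))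
    rw [rankLtCount]
    simpa only [smul_eq_mul] using this
  · have := Finset.sum_le_card_nsmul
      (((Finset.univ : Finset (Fin n)).powersetCard u).filter (fun U => subRank G U < u))
      (fun U => (Finset.univ.filter fun b : Fin n → ZMod 2 =>
        ¬ ∃ d : Fin l → ZMod 2, ∀ i ∈ U, G.mulVec d i = b i).card) (2 ^ n) (fun U hU => by
        rw [Finset.mem_filter] at hU
        have hc : U.card = u := (Finset.mem_powersetCard_univ).1 hU.1
        exact badB_le G U (hc ▸ hu₂))
    rw [rankLtCount]
    simpa only [smul_eq_mul] using this

theorem stmt4 (n l : ℕ) (G₀ : Matrix (Fin n) (Fin l) (ZMod 2))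
    (u : ℕ) (hu₁ : 1 ≤ u) (hu₂ : u ≤ n) :
    (1 / 2 : ℝ) * ((rankLtCount n l G₀ u : ℝ) / (n.choose u : ℝ))
        ≤ (failCount n l G₀ u : ℝ) / ((n.choose u : ℝ) * 2 ^ n)
      ∧ (failCount n l G₀ u : ℝ) / ((n.choose u : ℝ) * 2 ^ n)
        ≤ (rankLtCount n l G₀ u : ℝ) / (n.choose u : ℝ) := by
  classical
  obtain ⟨h1n, h2n⟩ := sandwich n l G₀ u hu₁ hu₂
  have hC : (0:ℝ) < (n.choose u : ℝ) := by
    exact_mod_cast Nat.choose_pos hu₂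
  have h1 : (rankLtCount n l G₀ u : ℝ) * 2 ^ (n-1) ≤ (failCount n l G₀ u : ℝ) := by
    exact_mod_cast h1n
  have h2 : (failCount n l G₀ u : ℝ) ≤ (rankLtCount n l G₀ u : ℝ) * 2 ^ n := by
    exact_mod_cast h2n
  have hn : (2:ℝ)^n = 2 * 2^(n-1) := by
    rw [← pow_succ']
    congr 1
    omega
  constructor
  · have e1 : (1/2:ℝ) * ((rankLtCount n l G₀ u : ℝ) / (n.choose u : ℝ))
        = ((rankLtCount n l G₀ u : ℝ) * 2^(n-1)) / ((n.choose u : ℝ) * 2^n) := by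
      rw [hn]
      field_simp
    rw [e1]
    have hpos : (0:ℝ) ≤ (n.choose u : ℝ) * 2^n := by positivity
    exact div_le_div_of_nonneg_right h1 hpos |>.trans_eq rfl
  · have e2 : (rankLtCount n l G₀ u : ℝ) / (n.choose u : ℝ)
        = ((rankLtCount n l G₀ u : ℝ) * 2^n) / ((n.choose u : ℝ) * 2^n) := by
      rw [mul_div_mul_right]
      positivity
    rw [e2]
    have hpos : (0:ℝ) ≤ (n.choose u : ℝ) * 2^n := by positivity
    exact div_le_div_of_nonneg_right h2 hpos |>.trans_eq rfl
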